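/- arXiv:2302.09469 — 3 statements merged into one kernel-verified Lean document; each statement's English description precedes it below -/
import Mathlib

section
/- Let $n \ge 1$, let $\Psi$ and $\Psi_0$ be $n \times n$ complex Hermitian positive definite matrices, let $a \in \mathbb{C}^n$, and let $c$ be a real number. If the linearized constraint $\mathrm{Re}(a^H \Psi_0^{-1} a) - \mathrm{Re}\big(a^H \Psi_0^{-1}(\Psi - \Psi_0)\Psi_0^{-1} a\big) \ge c$ holds, then the original constraint $\mathrm{Re}(a^H \Psi^{-1} a) \ge c$ holds. -/
open Matrix ComplexOrder

/-- The linearized (SCA surrogate) constraint implies the original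
constraint: if `Re(aᴴ Ψ₀⁻¹ a) - Re(aᴴ Ψ₀⁻¹ (Ψ - Ψ₀) Ψ₀⁻¹ a) ≥ c` then
`Re(aᴴ Ψ⁻¹ a) ≥ c`. -/
theorem sca_constraint_subset
    (n : ℕ) (hn : 1 ≤ n)
    (Ψ Ψ₀ : Matrix (Fin n) (Fin n) ℂ) (hΨ : Ψ.PosDef) (hΨ₀ : Ψ₀.PosDef)
    (a : Fin n → ℂ) (c : ℝ)
    (hlin : c ≤ (star a ⬝ᵥ Ψ₀⁻¹ *ᵥ a).re -
        (star a ⬝ᵥ (Ψ₀⁻¹ * (Ψ - Ψ₀) * Ψ₀⁻¹) *ᵥ a).re) :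
    c ≤ (star a ⬝ᵥ Ψ⁻¹ *ᵥ a).re := by
  set B : Matrix (Fin n) (Fin n) ℂ := Ψ⁻¹ - Ψ₀⁻¹ with hBdef
  have hBH : B.IsHermitian := (hΨ.isHermitian.inv).sub (hΨ₀.isHermitian.inv)
  -- key matrix identity
  have h1 : Ψ⁻¹ * Ψ = 1 := Matrix.nonsing_inv_mul Ψ hΨ.det_pos.ne'.isUnit
  have h2 : Ψ * Ψ⁻¹ = 1 := Matrix.mul_nonsing_inv Ψ hΨ.det_pos.ne'.isUnit
  have h3 : Ψ₀⁻¹ * Ψ₀ = 1 := Matrix.nonsing_inv_mul Ψ₀ hΨ₀.det_pos.ne'.isUnit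
  have h4 : Ψ₀ * Ψ₀⁻¹ = 1 := Matrix.mul_nonsing_inv Ψ₀ hΨ₀.det_pos.ne'.isUnit
  have hid : Ψ⁻¹ = Ψ₀⁻¹ - Ψ₀⁻¹ * (Ψ - Ψ₀) * Ψ₀⁻¹ + B * Ψ * B := by
    have k1 : Ψ⁻¹ * Ψ * Ψ⁻¹ = Ψ⁻¹ := by rw [h1, Matrix.one_mul]
    have k2 : Ψ₀⁻¹ * Ψ * Ψ⁻¹ = Ψ₀⁻¹ := by rw [Matrix.mul_assoc, h2, Matrix.mul_one]
    have k3 : Ψ⁻¹ * Ψ * Ψ₀⁻¹ = Ψ₀⁻¹ := by rw [h1, Matrix.one_mul]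
    have k4 : Ψ₀⁻¹ * Ψ₀ * Ψ₀⁻¹ = Ψ₀⁻¹ := by rw [h3, Matrix.one_mul]
    rw [hBdef]
    simp only [Matrix.sub_mul, Matrix.mul_sub, k1, k2, k3, k4]
    abel
  -- nonnegativity of the quadratic form of B * Ψ * B
  have hquad : 0 ≤ (star a ⬝ᵥ (B * Ψ * B) *ᵥ a).re := by
    have := hΨ.posSemidef.dotProduct_mulVec_nonneg (B *ᵥ a)
    have hz : star (B *ᵥ a) ⬝ᵥ Ψ *ᵥ (B *ᵥ a) = star a ⬝ᵥ (B * Ψ * B) *ᵥ a := by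
      rw [Matrix.star_mulVec, hBH.eq, Matrix.mulVec_mulVec,
        ← Matrix.dotProduct_mulVec, Matrix.mulVec_mulVec, Matrix.mul_assoc]
    rw [hz] at this
    exact (Complex.le_def.mp this).1
  calc c ≤ (star a ⬝ᵥ Ψ₀⁻¹ *ᵥ a).re -
        (star a ⬝ᵥ (Ψ₀⁻¹ * (Ψ - Ψ₀) * Ψ₀⁻¹) *ᵥ a).re := hlin
    _ ≤ (star a ⬝ᵥ Ψ₀⁻¹ *ᵥ a).re -
        (star a ⬝ᵥ (Ψ₀⁻¹ * (Ψ - Ψ₀) * Ψ₀⁻¹) *ᵥ a).re +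
        (star a ⬝ᵥ (B * Ψ * B) *ᵥ a).re := le_add_of_nonneg_right hquad
    _ = (star a ⬝ᵥ Ψ⁻¹ *ᵥ a).re := by
        rw [hid]
        simp only [Matrix.add_mulVec, Matrix.sub_mulVec, dotProduct_add,
          dotProduct_sub, Complex.add_re, Complex.sub_re]
end

section
/- Let $n \ge 1$ and $L \ge 1$. For each $l \in \{1, \dots, L\}$, let $\widehat V_l$ be an $n \times n$ complex Hermitian positive semidefinite matrix and $g_l \in \mathbb{C}^n$ a vector with $c_l := \mathrm{Re}(g_l^H \widehat V_l g_l) > 0$, and let $\widehat V_0$ be an $n \times n$ Hermitian positive semidefinite matrix. Define $v_l^* = c_l^{-1/2}\, \widehat V_l g_l$, $V_l^* = v_l^* (v_l^*)^H$ for $l = 1, \dots, L$, and $V_0^* = \sum_{l=1}^L \widehat V_l + \widehat V_0 - \sum_{l=1}^L V_l^*$. Then: (i) $V_0^*$ is Hermitian positive semidefinite; (ii) $\sum_{l=1}^L V_l^* + V_0^* = \sum_{l=1}^L \widehat V_l + \widehat V_0$, and in particular $\mathrm{tr}(V_0^*) + \sum_{l=1}^L \mathrm{tr}(V_l^*) =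 \mathrm{tr}(\widehat V_0) + \sum_{l=1}^L \mathrm{tr}(\widehat V_l)$; and (iii) $\mathrm{Re}(g_l^H V_l^* g_l) = \mathrm{Re}(g_l^H \widehat V_l g_l)$ for every $l \in \{1, \dots, L\}$. -/
open Matrix ComplexOrder

private lemma vecMulVec_mulVec' {n : ℕ} (u w x : Fin n → ℂ) :
    (vecMulVec u w) *ᵥ x = (w ⬝ᵥ x) • u := by
  ext i
  simp only [mulVec, dotProduct, vecMulVec_apply, Pi.smul_apply, smul_eq_mul,
    Finset.sum_mul]
  exact Finset.sum_congr rfl fun j _ => by ring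

private lemma star_dot_comm {n : ℕ} (u w : Fin n → ℂ) :
    star u ⬝ᵥ w = starRingEnd ℂ (star w ⬝ᵥ u) := by
  simp only [dotProduct, Pi.star_apply, map_sum, _root_.map_mul, Complex.star_def,
    Complex.conj_conj]
  exact Finset.sum_congr rfl fun j _ => by ring

private lemma herm_quad {n : ℕ} {A : Matrix (Fin n) (Fin n) ℂ} (hA : A.IsHermitian)
    (u w : Fin n → ℂ) :
    star u ⬝ᵥ A *ᵥ w = starRingEnd ℂ (star w ⬝ᵥ A *ᵥ u) := by
  have ha : ∀ i j, (starRingEnd ℂ) (A j i) = A i j := fun i j => hA.apply i j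
  simp only [dotProduct, mulVec, Pi.star_apply, map_sum, _root_.map_mul,
    Complex.star_def, Complex.conj_conj, Finset.mul_sum]
  rw [Finset.sum_comm]
  refine Finset.sum_congr rfl fun i _ => Finset.sum_congr rfl fun j _ => ?_
  rw [ha]
  ring

private lemma vecMulVec_star_herm {n : ℕ} (v : Fin n → ℂ) :
    (vecMulVec v (star v)).IsHermitian := by
  ext i j
  simp only [conjTranspose_apply, vecMulVec_apply, Pi.star_apply, star_mul', star_star]
  ring

private lemma cs_ineq {n : ℕ} {A : Matrix (Fin n) (Fin n) ℂ} (hA : A.PosSemidef)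
    {g : Fin n → ℂ} {c : ℝ} (hg : star g ⬝ᵥ A *ᵥ g = (c : ℂ)) (hcpos : 0 < c)
    (x : Fin n → ℂ) :
    Complex.normSq (star g ⬝ᵥ A *ᵥ x) ≤ c * (star x ⬝ᵥ A *ᵥ x).re := by
  set s := star g ⬝ᵥ A *ᵥ x with hs
  have hxg : star x ⬝ᵥ A *ᵥ g = starRingEnd ℂ s := herm_quad hA.1 x g
  have h0 := hA.dotProduct_mulVec_nonneg ((c : ℂ) • x - s • g)
  have expand : star ((c : ℂ) • x - s • g) ⬝ᵥ A *ᵥ ((c : ℂ) • x - s • g)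
      = (c : ℂ) * (c : ℂ) * (star x ⬝ᵥ A *ᵥ x)
        - (c : ℂ) * s * (star x ⬝ᵥ A *ᵥ g)
        - starRingEnd ℂ s * (c : ℂ) * (star g ⬝ᵥ A *ᵥ x)
        + starRingEnd ℂ s * s * (star g ⬝ᵥ A *ᵥ g) := by
    simp only [star_sub, star_smul, mulVec_sub, mulVec_smul, sub_dotProduct,
      dotProduct_sub, smul_dotProduct, dotProduct_smul, smul_eq_mul,
      Complex.star_def, Complex.conj_ofReal]
    ring
  have hexp : star ((c : ℂ) • x - s • g) ⬝ᵥ A *ᵥ ((c : ℂ) • x - s • g)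
      = ((c ^ 2 : ℝ) : ℂ) * (star x ⬝ᵥ A *ᵥ x)
        - (c : ℂ) * ((Complex.normSq s : ℝ) : ℂ) := by
    rw [expand, hxg, hg, ← hs, ← Complex.mul_conj]
    push_cast
    ring
  rw [hexp, Complex.nonneg_iff] at h0
  obtain ⟨hre, -⟩ := h0
  simp only [Complex.sub_re, Complex.mul_re, Complex.ofReal_re, Complex.ofReal_im,
    zero_mul, sub_zero, mul_zero] at hre
  nlinarith [Complex.normSq_nonneg s, hre]

private lemma psd_value {n : ℕ} {A : Matrix (Fin n) (Fin n) ℂ} (hA : A.PosSemidef)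
    {c : ℝ} (g : Fin n → ℂ) (hc : c = (star g ⬝ᵥ A *ᵥ g).re) :
    star g ⬝ᵥ A *ᵥ g = (c : ℂ) := by
  have h := hA.dotProduct_mulVec_nonneg g
  rw [Complex.nonneg_iff] at h
  apply Complex.ext
  · simp [hc]
  · simp [← h.2]

private lemma quad_vstar {n : ℕ} {A : Matrix (Fin n) (Fin n) ℂ} (hA : A.PosSemidef)
    {g v : Fin n → ℂ} {c : ℝ} (hcpos : 0 < c)
    (hv : v = (((Real.sqrt c)⁻¹ : ℝ) : ℂ) • (A *ᵥ g)) (x : Fin n → ℂ) :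
    star x ⬝ᵥ (vecMulVec v (star v)) *ᵥ x
      = ((c⁻¹ * Complex.normSq (star g ⬝ᵥ A *ᵥ x) : ℝ) : ℂ) := by
  have ht : star x ⬝ᵥ v
      = (((Real.sqrt c)⁻¹ : ℝ) : ℂ) * starRingEnd ℂ (star g ⬝ᵥ A *ᵥ x) := by
    rw [hv, dotProduct_smul, smul_eq_mul, herm_quad hA.1 x g]
  rw [vecMulVec_mulVec', dotProduct_smul, smul_eq_mul, star_dot_comm v x,
    ← Complex.normSq_eq_conj_mul_self, ht, Complex.normSq_mul, Complex.normSq_conj,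
    Complex.normSq_ofReal]
  norm_cast
  rw [← mul_inv, Real.mul_self_sqrt hcpos.le]

private lemma sub_psd {n : ℕ} {A : Matrix (Fin n) (Fin n) ℂ} (hA : A.PosSemidef)
    {g v : Fin n → ℂ} {c : ℝ} (hcpos : 0 < c)
    (hg : star g ⬝ᵥ A *ᵥ g = (c : ℂ))
    (hv : v = (((Real.sqrt c)⁻¹ : ℝ) : ℂ) • (A *ᵥ g)) :
    (A - vecMulVec v (star v)).PosSemidef := by
  refine .of_dotProduct_mulVec_nonneg (hA.1.sub (vecMulVec_star_herm v)) fun x => ?_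
  rw [sub_mulVec, dotProduct_sub, quad_vstar hA hcpos hv x]
  rw [Complex.nonneg_iff]
  have him : (star x ⬝ᵥ A *ᵥ x).im = 0 := by
    have h2 := congrArg Complex.im (herm_quad hA.1 x x)
    simp only [Complex.conj_im] at h2
    linarith
  have hcs := cs_ineq hA hg hcpos x
  constructor
  · simp only [Complex.sub_re, Complex.ofReal_re]
    have h3 := mul_le_mul_of_nonneg_left hcs (inv_nonneg.2 hcpos.le)
    rw [← mul_assoc, inv_mul_cancel₀ hcpos.ne', one_mul] at h3
    linarith
  · simp [him]

/-- Theorem 1 of the paper: from a feasible relaxed solution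
`(V̂₀, …, V̂_L)` one constructs rank-one downlink covariances
`Vₗ* = vₗ*(vₗ*)ᴴ` with `vₗ* = (gₗᴴ V̂ₗ gₗ)^{-1/2} V̂ₗ gₗ` and a radar
covariance `V₀* = ∑ₗ V̂ₗ + V̂₀ - ∑ₗ Vₗ*` such that:
(i) `V₀* ⪰ 0`; (ii) the total covariance and total transmit power (trace)
are unchanged; (iii) each desired-signal power `gₗᴴ Vₗ gₗ` is preserved. -/
theorem rank_one_reconstruction
    (n L : ℕ) (hn : 1 ≤ n) (hL : 1 ≤ L)
    (Vhat : Fin L → Matrix (Fin n) (Fin n) ℂ)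
    (hVhat : ∀ l, (Vhat l).PosSemidef)
    (g : Fin L → (Fin n → ℂ))
    (c : Fin L → ℝ) (hc : ∀ l, c l = (star (g l) ⬝ᵥ (Vhat l) *ᵥ (g l)).re)
    (hcpos : ∀ l, 0 < c l)
    (V0hat : Matrix (Fin n) (Fin n) ℂ) (hV0hat : V0hat.PosSemidef)
    (vstar : Fin L → (Fin n → ℂ))
    (hvstar : ∀ l, vstar l = (((Real.sqrt (c l))⁻¹ : ℝ) : ℂ) • ((Vhat l) *ᵥ (g l)))
    (Vstar : Fin L → Matrix (Fin n) (Fin n) ℂ)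
    (hVstar : ∀ l, Vstar l = vecMulVec (vstar l) (star (vstar l)))
    (V0star : Matrix (Fin n) (Fin n) ℂ)
    (hV0star : V0star = ∑ l, Vhat l + V0hat - ∑ l, Vstar l) :
    V0star.PosSemidef ∧
    (∑ l, Vstar l + V0star = ∑ l, Vhat l + V0hat ∧
      V0star.trace + ∑ l, (Vstar l).trace =
        V0hat.trace + ∑ l, (Vhat l).trace) ∧
    ∀ l, (star (g l) ⬝ᵥ (Vstar l) *ᵥ (g l)).re =
        (star (g l) ⬝ᵥ (Vhat l) *ᵥ (g l)).re := by
  have hgAg : ∀ l, star (g l) ⬝ᵥ (Vhat l) *ᵥ (g l) = ((c l : ℝ) : ℂ) :=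
    fun l => psd_value (hVhat l) (g l) (hc l)
  have hsub : ∀ l, (Vhat l - Vstar l).PosSemidef := by
    intro l
    rw [hVstar l]
    exact sub_psd (hVhat l) (hcpos l) (hgAg l) (hvstar l)
  have hV0eq : V0star = (∑ l, (Vhat l - Vstar l)) + V0hat := by
    rw [hV0star, Finset.sum_sub_distrib]
    abel
  refine ⟨?_, ⟨?_, ?_⟩, ?_⟩
  · rw [hV0eq]
    refine Matrix.PosSemidef.add ?_ hV0hat
    refine Finset.sum_induction _ _ (fun a b ha hb => ha.add hb) Matrix.PosSemidef.zero
      (fun l _ => hsub l)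
  · rw [hV0star]; abel
  · have heq : ∑ l, Vstar l + V0star = ∑ l, Vhat l + V0hat := by rw [hV0star]; abel
    have ht := congrArg Matrix.trace heq
    rw [trace_add, trace_add, trace_sum, trace_sum] at ht
    linear_combination ht
  · intro l
    rw [hVstar l, quad_vstar (hVhat l) (hcpos l) (hvstar l) (g l), hgAg l]
    simp only [Complex.ofReal_re]
    rw [Complex.normSq_ofReal]
    field_simp
end

section
/- Let $n \ge 1$ and $L \ge 1$. For each $l \in \{1, \dots, L\}$, let $\widehat V_l$ be an $n \times n$ complex Hermitian positive semidefinite matrix and $g_l \in \mathbb{C}^n$ with $c_l := \mathrm{Re}(g_l^H \widehat V_l g_l) > 0$; let $\widehat V_0$ be Hermitian positive semidefinite, let $\sigma_l^2 > 0$ and $\tau_l > 0$ be reals, and set $\bar Q = \sum_{l=1}^L \widehat V_l + \widehat V_0$. Define $v_l^* = c_l^{-1/2} \widehat V_l g_l$, $V_l^* = v_l^*(v_l^*)^H$, $V_0^* = \bar Q - \sum_{l=1}^L V_l^*$, and $\bar Q^* = \sum_{l=1}^L V_l^* + V_0^*$. If for every $l$ the downlink constraint $(1 + 1/\tau_l)\,\mathrm{Re}(g_l^H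 \widehat V_l g_l) \ge \mathrm{Re}(g_l^H \bar Q g_l) + \sigma_l^2$ holds, then for every $l$ the constructed solution satisfies $(1 + 1/\tau_l)\,\mathrm{Re}(g_l^H V_l^* g_l) \ge \mathrm{Re}(g_l^H \bar Q^* g_l) + \sigma_l^2$. -/
open Matrix ComplexOrder

lemma dot_vecMulVec_aux (n : ℕ) (v w x : Fin n → ℂ) :
    star x ⬝ᵥ (vecMulVec v w) *ᵥ x = (star x ⬝ᵥ v) * (w ⬝ᵥ x) := by
  simp only [dotProduct, mulVec, vecMulVec_apply, Finset.mul_sum, Finset.sum_mul]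
  rw [Finset.sum_comm]
  congr 1; ext i; congr 1; ext j; ring

lemma herm_dot_real (n : ℕ) (A : Matrix (Fin n) (Fin n) ℂ) (hA : A.IsHermitian)
    (x : Fin n → ℂ) :
    (star x ⬝ᵥ A *ᵥ x) = (((star x ⬝ᵥ A *ᵥ x).re : ℝ) : ℂ) := by
  have h : (starRingEnd ℂ) (star x ⬝ᵥ A *ᵥ x) = star x ⬝ᵥ A *ᵥ x := by
    calc (starRingEnd ℂ) (star x ⬝ᵥ A *ᵥ x) = star (star x ⬝ᵥ A *ᵥ x) := rfl
      _ = star (A *ᵥ x) ⬝ᵥ star (star x) := (star_dotProduct_star _ _).symm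
      _ = (star x ᵥ* Aᴴ) ⬝ᵥ x := by rw [star_mulVec, star_star]
      _ = star x ⬝ᵥ Aᴴ *ᵥ x := (dotProduct_mulVec _ _ _).symm
      _ = star x ⬝ᵥ A *ᵥ x := by rw [hA]
  exact (Complex.conj_eq_iff_re.mp h).symm

/-- Corollary of Theorem 1: the rank-one-extraction construction preserves
feasibility of all (reformulated) downlink SINR constraints. -/
theorem rank_one_preserves_downlink_constraints
    (n L : ℕ) (hn : 1 ≤ n) (hL : 1 ≤ L)
    (Vhat : Fin L → Matrix (Fin n) (Fin n) ℂ)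
    (hVhat : ∀ l, (Vhat l).PosSemidef)
    (g : Fin L → (Fin n → ℂ))
    (c : Fin L → ℝ) (hc : ∀ l, c l = (star (g l) ⬝ᵥ (Vhat l) *ᵥ (g l)).re)
    (hcpos : ∀ l, 0 < c l)
    (V0hat : Matrix (Fin n) (Fin n) ℂ) (hV0hat : V0hat.PosSemidef)
    (σ2 τ : Fin L → ℝ) (hσ2 : ∀ l, 0 < σ2 l) (hτ : ∀ l, 0 < τ l)
    (Qbar : Matrix (Fin n) (Fin n) ℂ) (hQbar : Qbar = ∑ l, Vhat l + V0hat)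
    (vstar : Fin L → (Fin n → ℂ))
    (hvstar : ∀ l, vstar l = (((Real.sqrt (c l))⁻¹ : ℝ) : ℂ) • ((Vhat l) *ᵥ (g l)))
    (Vstar : Fin L → Matrix (Fin n) (Fin n) ℂ)
    (hVstar : ∀ l, Vstar l = vecMulVec (vstar l) (star (vstar l)))
    (V0star : Matrix (Fin n) (Fin n) ℂ)
    (hV0star : V0star = Qbar - ∑ l, Vstar l)
    (Qbarstar : Matrix (Fin n) (Fin n) ℂ)
    (hQbarstar : Qbarstar = ∑ l, Vstar l + V0star)
    (hfeas : ∀ l, (star (g l) ⬝ᵥ Qbar *ᵥ (g l)).re + σ2 l ≤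
        (1 + 1 / τ l) * (star (g l) ⬝ᵥ (Vhat l) *ᵥ (g l)).re) :
    ∀ l, (star (g l) ⬝ᵥ Qbarstar *ᵥ (g l)).re + σ2 l ≤
        (1 + 1 / τ l) * (star (g l) ⬝ᵥ (Vstar l) *ᵥ (g l)).re := by
  intro l
  have hQQ : Qbarstar = Qbar := by
    rw [hQbarstar, hV0star]; abel
  set z := star (g l) ⬝ᵥ (Vhat l) *ᵥ (g l) with hzdef
  have hz : z = ((c l : ℝ) : ℂ) := by
    rw [hc l]; exact herm_dot_real n (Vhat l) (hVhat l).1 (g l)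
  set r : ℝ := (Real.sqrt (c l))⁻¹ with hrdef
  have h1 : star (g l) ⬝ᵥ vstar l = (r : ℂ) * z := by
    rw [hvstar l, dotProduct_smul, smul_eq_mul]
  have h2 : star (vstar l) ⬝ᵥ g l = (r : ℂ) * z := by
    rw [hvstar l]
    have hsr : star (((r : ℝ) : ℂ) • ((Vhat l) *ᵥ (g l)))
        = ((r : ℝ) : ℂ) • star ((Vhat l) *ᵥ (g l)) := by
      simp [star_smul]
    rw [hsr, smul_dotProduct, smul_eq_mul]
    congr 1
    calc star ((Vhat l) *ᵥ (g l)) ⬝ᵥ g l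
        = (star (g l) ᵥ* (Vhat l)ᴴ) ⬝ᵥ g l := by rw [star_mulVec]
      _ = star (g l) ⬝ᵥ (Vhat l)ᴴ *ᵥ g l := (dotProduct_mulVec _ _ _).symm
      _ = z := by rw [(hVhat l).1]
  have hr2 : r * c l * (r * c l) = c l := by
    have hs : Real.sqrt (c l) * Real.sqrt (c l) = c l :=
      Real.mul_self_sqrt (le_of_lt (hcpos l))
    have hspos : 0 < Real.sqrt (c l) := Real.sqrt_pos.mpr (hcpos l)
    field_simp [hrdef]
    rw [hrdef, inv_pow, Real.sq_sqrt (le_of_lt (hcpos l)), sq, ← mul_assoc, inv_mul_cancel₀ (ne_of_gt (hcpos l)), one_mul]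
  have hVl : star (g l) ⬝ᵥ (Vstar l) *ᵥ g l = ((c l : ℝ) : ℂ) := by
    rw [hVstar l, dot_vecMulVec_aux, h1, h2, hz]
    exact_mod_cast Complex.ofReal_inj.mpr hr2
  have hVlre : (star (g l) ⬝ᵥ (Vstar l) *ᵥ g l).re = c l := by
    rw [hVl, Complex.ofReal_re]
  rw [hQQ, hVlre]
  calc (star (g l) ⬝ᵥ Qbar *ᵥ (g l)).re + σ2 l
      ≤ (1 + 1 / τ l) * (star (g l) ⬝ᵥ (Vhat l) *ᵥ (g l)).re := hfeas l
    _ = (1 + 1 / τ l) * c l := by rw [← hc l]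
end
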